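/- Let D ⊂ ℂ be the open disk of radius γ_D > 0 centered at a_0 ∈ ℂ, and let λ ∈ ℝ with |λ| ≥ 1/2. Then the generalized polarization tensors of D satisfy N^{(2)}_{11}(D, λ) = 2πγ_D²/λ and N^{(2)}_{21}(D, λ) = 2·conj(a_0)·N^{(2)}_{11}(D, λ) = 4π·conj(a_0)·γ_D²/λ. -/

import Mathlib

open scoped Real


/-- A bounded simply connected planar domain (identified with a subset of `ℂ`)
with `C²` boundary, bundled with a `C²` boundary parametrization `ρ` (2π-periodic,
injective on a period, with non-vanishing derivative) and the outward unit normal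
vector field `ν` along the boundary. -/
structure C2Domain where
  /-- the open set -/
  carrier : Set ℂ
  /-- boundary parametrization -/
  ρ : ℝ → ℂ
  /-- outward unit normal along the boundary, as a function of the parameter -/
  ν : ℝ → ℂ
  isOpen : IsOpen carrier
  isBounded : Bornology.IsBounded carrier
  nonempty : carrier.Nonempty
  simplyConnected : SimplyConnectedSpace carrier
  ρ_contDiff : ContDiff ℝ 2 ρ
  ρ_periodic : Function.Periodic ρ (2 * π)
  ρ_injOn : Set.InjOn ρ (Set.Ico 0 (2 * π))
  ρ_deriv_ne : ∀ t, deriv ρ t ≠ 0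
  range_ρ : Set.range ρ = frontier carrier
  ν_unit : ∀ t, ‖ν t‖ = 1
  ν_orthogonal : ∀ t, ((ν t) * (starRingEnd ℂ) (deriv ρ t)).re = 0
  ν_outward : ∀ t, ∃ ε > 0, ∀ s ∈ Set.Ioo (0 : ℝ) ε, ρ t + (s : ℂ) * ν t ∉ closure carrier

namespace C2Domain

/-- The arclength element `|ρ'(s)|` of the boundary parametrization. -/
noncomputable def arc (D : C2Domain) (s : ℝ) : ℝ := ‖deriv D.ρ s‖

/-- The Neumann–Poincaré operator `K*_{∂Ω}` associated with `D`, written in the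
boundary parametrization: `K*[φ](t) = (1/2π) ∫₀^{2π} ⟨ρ(t)−ρ(s), ν(t)⟩/|ρ(t)−ρ(s)|² φ(s) |ρ'(s)| ds`. -/
noncomputable def npStar (D : C2Domain) (φ : ℝ → ℂ) (t : ℝ) : ℂ :=
  ((1 / (2 * π) : ℝ) : ℂ) *
    ∫ s in (0 : ℝ)..(2 * π),
      ((((D.ρ t - D.ρ s) * (starRingEnd ℂ) (D.ν t)).re /
          ‖D.ρ t - D.ρ s‖ ^ 2 : ℝ) : ℂ) * φ s * ((D.arc s : ℝ) : ℂ)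

/-- The integral `∫_{∂Ω} z^n φ(z) dσ(z)` over the boundary of `D`; with `φ` the relevant
density this is the generalized polarization tensor `N_{mn}`. -/
noncomputable def gptInt (D : C2Domain) (n : ℕ) (φ : ℝ → ℂ) : ℂ :=
  ∫ s in (0 : ℝ)..(2 * π), (D.ρ s) ^ n * φ s * ((D.arc s : ℝ) : ℂ)

/-- The Neumann data `∂(z^m)/∂ν` on the boundary of `D`: the directional derivative of
`z ↦ z^m` in the direction of the outward normal, `m z^{m−1} ν`. -/
noncomputable def data1 (D : C2Domain) (m : ℕ) (t : ℝ) : ℂ :=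
  (m : ℂ) * (D.ρ t) ^ (m - 1) * D.ν t

/-- The Neumann data `∂(conj(z)^m)/∂ν` on the boundary of `D`. -/
noncomputable def data2 (D : C2Domain) (m : ℕ) (t : ℝ) : ℂ :=
  (starRingEnd ℂ) (D.data1 m t)

end C2Domain

/-- `IsGPTDensity D lam h φ` asserts that `φ` is a (continuous, 2π-periodic, mean-zero)
density on `∂Ω` solving the integral equation `(λ I − K*_{∂Ω})[φ] = h`. -/
structure IsGPTDensity (D : C2Domain) (lam : ℝ) (h : ℝ → ℂ) (φ : ℝ → ℂ) : Prop where
  continuous : Continuous φ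
  periodic : Function.Periodic φ (2 * π)
  eqn : ∀ t, (lam : ℂ) * φ t - D.npStar φ t = h t
  meanZero : (∫ s in (0 : ℝ)..(2 * π), φ s * ((D.arc s : ℝ) : ℂ)) = 0

open Complex MeasureTheory

lemma int_exp_zero (k : ℤ) (hk : k ≠ 0) :
    (∫ s in (0:ℝ)..(2*π), Complex.exp ((k:ℂ) * Complex.I * s)) = 0 := by
  have hc : ((k:ℂ) * Complex.I) ≠ 0 := by
    simp [Complex.ext_iff, hk, Complex.I_ne_zero]
  rw [integral_exp_mul_complex hc]
  have h1 : Complex.exp ((k:ℂ) * Complex.I * ((2*π:ℝ):ℂ)) = 1 := by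
    have := Complex.exp_int_mul_two_pi_mul_I k
    rw [← this]; push_cast; ring_nf
  rw [h1]; simp

lemma circle_hasDerivAt (a₀ : ℂ) (γD : ℝ) (s : ℝ) :
    HasDerivAt (fun t : ℝ => a₀ + (γD : ℂ) * Complex.exp (Complex.I * t))
      ((γD : ℂ) * (Complex.exp (Complex.I * s) * Complex.I)) s := by
  have h0 : HasDerivAt (fun z : ℂ => Complex.I * z) Complex.I (s:ℂ) := by
    simpa using (hasDerivAt_id (s:ℂ)).const_mul Complex.I
  exact ((h0.cexp.comp_ofReal).const_mul (γD:ℂ)).const_add a₀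

lemma kernel_eq {γD : ℝ} (hγ : 0 < γD) {u v : ℂ} (hu : Complex.normSq u = 1)
    (hv : Complex.normSq v = 1) (huv : u ≠ v) :
    (((γD:ℂ) * (u - v)) * (starRingEnd ℂ) u).re /
      ‖(γD:ℂ) * (u - v)‖ ^ 2 = 1 / (2 * γD) := by
  set r : ℝ := (v * (starRingEnd ℂ) u).re with hr
  set q : ℝ := Complex.normSq (u - v) with hqdef
  have hq0 : q ≠ 0 := by simpa [hqdef, sub_eq_zero] using huv
  have hr' : (u * (starRingEnd ℂ) v).re = r := by
    have h : u * (starRingEnd ℂ) v = (starRingEnd ℂ) (v * (starRingEnd ℂ) u) := by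
      rw [map_mul, Complex.conj_conj]; ring
    rw [h, Complex.conj_re]
  have hq2 : q = 2 - 2 * r := by
    have h1 : ((u - v) * (starRingEnd ℂ) (u - v)).re = q := by
      rw [Complex.mul_conj]; simp; exact hqdef.symm
    have h2 : (u - v) * (starRingEnd ℂ) (u - v)
        = u * (starRingEnd ℂ) u + v * (starRingEnd ℂ) v
          - (u * (starRingEnd ℂ) v + v * (starRingEnd ℂ) u) := by
      rw [map_sub]; ring
    rw [h2] at h1
    simp only [Complex.sub_re, Complex.add_re, Complex.mul_conj, Complex.ofReal_re,
      hu, hv, hr'] at h1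
    linarith
  have hnum : (((γD:ℂ) * (u - v)) * (starRingEnd ℂ) u).re = γD * (1 - r) := by
    have h2 : ((γD:ℂ) * (u - v)) * (starRingEnd ℂ) u
        = (γD:ℂ) * (u * (starRingEnd ℂ) u - v * (starRingEnd ℂ) u) := by ring
    rw [h2, Complex.re_ofReal_mul]
    simp [Complex.mul_conj, hu, ← hr]
  have hden : ‖(γD:ℂ) * (u - v)‖ ^ 2 = γD ^ 2 * q := by
    rw [Complex.sq_norm, Complex.normSq_mul, Complex.normSq_ofReal, ← hqdef]; ring
  rw [hnum, hden]
  have h1r : 1 - r = q / 2 := by linarith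
  rw [h1r]; field_simp

lemma exp_eq_countable (t : ℝ) :
    {s : ℝ | Complex.exp (Complex.I * s) = Complex.exp (Complex.I * t)}.Countable := by
  apply Set.Countable.mono _ (Set.countable_range (fun k : ℤ => t + k * (2*π)))
  intro s hs
  simp only [Set.mem_setOf_eq] at hs
  have h1 : Complex.exp (Complex.I * s - Complex.I * t) = 1 := by
    rw [Complex.exp_sub, hs, div_self (Complex.exp_ne_zero _)]
  rw [Complex.exp_eq_one_iff] at h1
  obtain ⟨n, hn⟩ := h1
  refine ⟨n, ?_⟩
  have h2 : Complex.I * ((s:ℂ) - t) = Complex.I * (n * (2*π)) := by linear_combination hn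
  have h3 := mul_left_cancel₀ Complex.I_ne_zero h2
  have h4 : (s:ℝ) = t + n * (2*π) := by
    exact_mod_cast (by linear_combination h3 : (s:ℂ) = t + n*(2*π))
  simp [h4]

lemma normSq_exp_I (t : ℝ) : Complex.normSq (Complex.exp (Complex.I * t)) = 1 := by
  rw [Complex.normSq_eq_norm_sq, Complex.norm_exp]
  simp

/-- Let `D` be the open disk of radius `γ_D > 0` centered at `a₀ ∈ ℂ`
(with its standard boundary parametrization `t ↦ a₀ + γ_D e^{it}` and outward normal
`t ↦ e^{it}`) and `λ ∈ ℝ` with `|λ| ≥ 1/2`.  Then the generalized polarization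
tensors of `D` satisfy `N⁽²⁾₁₁(D,λ) = 2πγ_D²/λ` and
`N⁽²⁾₂₁(D,λ) = 2·conj(a₀)·N⁽²⁾₁₁(D,λ) = 4π·conj(a₀)·γ_D²/λ`. -/
theorem gpt_disk
    (a₀ : ℂ) (γD : ℝ) (hγ : 0 < γD)
    (D : C2Domain)
    (hcar : D.carrier = Metric.ball a₀ γD)
    (hρ : ∀ t : ℝ, D.ρ t = a₀ + (γD : ℂ) * Complex.exp (Complex.I * t))
    (hν : ∀ t : ℝ, D.ν t = Complex.exp (Complex.I * t))
    (lam : ℝ) (hlam : 1 / 2 ≤ |lam|)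
    (ψ : ℕ → ℝ → ℂ)
    (hψ : ∀ m, 1 ≤ m → IsGPTDensity D lam (D.data2 m) (ψ m)) :
    D.gptInt 1 (ψ 1) = ((2 * π * γD ^ 2 / lam : ℝ) : ℂ) ∧
    D.gptInt 1 (ψ 2) = 2 * (starRingEnd ℂ) a₀ * D.gptInt 1 (ψ 1) ∧
    D.gptInt 1 (ψ 2) = 4 * (π : ℂ) * (starRingEnd ℂ) a₀ * ((γD ^ 2 / lam : ℝ) : ℂ) := by
  
  classical
  have hγ0 : (γD:ℂ) ≠ 0 := by exact_mod_cast hγ.ne'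
  have hlamne : lam ≠ 0 := by
    intro h; rw [h] at hlam; simp at hlam; linarith
  have hlam0 : (lam:ℂ) ≠ 0 := by exact_mod_cast hlamne
  have hρfun : D.ρ = fun t : ℝ => a₀ + (γD : ℂ) * Complex.exp (Complex.I * t) :=
    funext hρ
  -- arclength is constant γD
  have harc : ∀ s : ℝ, D.arc s = γD := by
    intro s
    unfold C2Domain.arc
    rw [hρfun, (circle_hasDerivAt a₀ γD s).deriv]
    simp [Complex.norm_exp, abs_of_pos hγ]
  -- NP operator kills mean-zero densities
  have hnp : ∀ φ : ℝ → ℂ,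
      (∫ s in (0:ℝ)..(2*π), φ s * ((D.arc s : ℝ) : ℂ)) = 0 →
      ∀ t, D.npStar φ t = 0 := by
    intro φ hmean t
    unfold C2Domain.npStar
    have hcong : ∀ᵐ s : ℝ, s ∈ Set.uIoc (0:ℝ) (2*π) →
        ((((D.ρ t - D.ρ s) * (starRingEnd ℂ) (D.ν t)).re /
            ‖D.ρ t - D.ρ s‖ ^ 2 : ℝ) : ℂ) * φ s * ((D.arc s : ℝ) : ℂ)
          = ((1/(2*γD) : ℝ) : ℂ) * (φ s * ((D.arc s : ℝ) : ℂ)) := by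
      have hz := (exp_eq_countable t).measure_zero MeasureTheory.volume
      filter_upwards [(MeasureTheory.measure_eq_zero_iff_ae_notMem (μ := MeasureTheory.volume)).mp hz]
        with s hs _
      have huv : Complex.exp (Complex.I * (t:ℝ)) ≠ Complex.exp (Complex.I * (s:ℝ)) := by
        intro h; exact hs (by simpa using h.symm)
      have hdiff : D.ρ t - D.ρ s
          = (γD:ℂ) * (Complex.exp (Complex.I * t) - Complex.exp (Complex.I * s)) := by
        rw [hρ t, hρ s]; ring
      rw [hdiff, hν t,
        kernel_eq hγ (normSq_exp_I t) (normSq_exp_I s) huv]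
      ring
    rw [intervalIntegral.integral_congr_ae hcong,
      intervalIntegral.integral_const_mul, hmean, mul_zero, mul_zero]
  -- the densities are explicit
  have hψeq : ∀ m, 1 ≤ m → ∀ t, ψ m t = D.data2 m t / (lam:ℂ) := by
    intro m hm t
    have h := (hψ m hm).eqn t
    rw [hnp _ (hψ m hm).meanZero t, sub_zero] at h
    rw [eq_div_iff hlam0]
    linear_combination h
  -- pointwise exponential facts
  have hconj : ∀ s : ℝ, (starRingEnd ℂ) (Complex.exp (Complex.I * s))
      = Complex.exp (((-1:ℤ):ℂ) * Complex.I * s) := by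
    intro s
    rw [← Complex.exp_conj]
    congr 1
    rw [map_mul, Complex.conj_I, Complex.conj_ofReal]
    push_cast; ring
  have huw : ∀ s : ℝ, Complex.exp (Complex.I * s) * Complex.exp (((-1:ℤ):ℂ) * Complex.I * s) = 1 := by
    intro s
    rw [← Complex.exp_add, show Complex.I * (s:ℂ) + ((-1:ℤ):ℂ) * Complex.I * s = 0 by push_cast; ring,
      Complex.exp_zero]
  have hw2 : ∀ s : ℝ, Complex.exp (((-1:ℤ):ℂ) * Complex.I * s) * Complex.exp (((-1:ℤ):ℂ) * Complex.I * s)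
      = Complex.exp (((-2:ℤ):ℂ) * Complex.I * s) := by
    intro s
    rw [← Complex.exp_add]
    congr 1; push_cast; ring
  -- integrability of exponentials
  have hcont : ∀ k : ℤ, Continuous (fun s : ℝ => Complex.exp ((k:ℂ) * Complex.I * s)) := by
    intro k
    exact Complex.continuous_exp.comp (by continuity)
  -- first GPT
  have hg1 : D.gptInt 1 (ψ 1) = ((2 * π * γD ^ 2 / lam : ℝ) : ℂ) := by
    unfold C2Domain.gptInt
    have heq : ∀ s : ℝ, D.ρ s ^ 1 * ψ 1 s * ((D.arc s : ℝ) : ℂ)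
        = ((γD:ℂ)^2 / lam) + (a₀ * γD / lam) * Complex.exp (((-1:ℤ):ℂ) * Complex.I * s) := by
      intro s
      rw [harc s, hψeq 1 le_rfl s]
      unfold C2Domain.data2 C2Domain.data1
      rw [hρ s, hν s]
      simp only [show (1:ℕ)-1=0 from rfl, pow_zero, mul_one, one_mul, Nat.cast_one,
        map_mul, map_one, hconj s]
      linear_combination ((γD:ℂ)^2 / lam) * huw s
    rw [intervalIntegral.integral_congr (fun s _ => heq s),
      intervalIntegral.integral_add intervalIntegrable_const
        ((continuous_const.fun_mul (hcont (-1))).intervalIntegrable _ _),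
      intervalIntegral.integral_const_mul, int_exp_zero (-1) (by norm_num),
      intervalIntegral.integral_const, Complex.real_smul]
    push_cast
    field_simp
    ring
  -- second GPT
  have hg2 : D.gptInt 1 (ψ 2) = 4 * (π : ℂ) * (starRingEnd ℂ) a₀ * ((γD ^ 2 / lam : ℝ) : ℂ) := by
    unfold C2Domain.gptInt
    have heq : ∀ s : ℝ, D.ρ s ^ 1 * ψ 2 s * ((D.arc s : ℝ) : ℂ)
        = (2 * (γD:ℂ)^2 * (starRingEnd ℂ) a₀ / lam)
          + ((2 * γD * a₀ * (starRingEnd ℂ) a₀ + 2 * (γD:ℂ)^3) / lam)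
              * Complex.exp (((-1:ℤ):ℂ) * Complex.I * s)
          + (2 * (γD:ℂ)^2 * a₀ / lam) * Complex.exp (((-2:ℤ):ℂ) * Complex.I * s) := by
      intro s
      rw [harc s, hψeq 2 (by norm_num) s]
      unfold C2Domain.data2 C2Domain.data1
      rw [hρ s, hν s]
      simp only [show (2:ℕ)-1=1 from rfl, pow_one, Nat.cast_ofNat, map_mul, map_add,
        map_ofNat, Complex.conj_ofReal, hconj s]
      linear_combination (2 * (γD:ℂ)^2 * a₀ / lam) * hw2 s
        + ((2 * (γD:ℂ)^2 * (starRingEnd ℂ) a₀ / lam)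
            + (2 * (γD:ℂ)^3 / lam) * Complex.exp (((-1:ℤ):ℂ) * Complex.I * s)) * huw s
    rw [intervalIntegral.integral_congr (fun s _ => heq s),
      intervalIntegral.integral_add
        (intervalIntegrable_const.add
          ((continuous_const.fun_mul (hcont (-1))).intervalIntegrable _ _))
        ((continuous_const.fun_mul (hcont (-2))).intervalIntegrable _ _),
      intervalIntegral.integral_add intervalIntegrable_const
        ((continuous_const.fun_mul (hcont (-1))).intervalIntegrable _ _),
      intervalIntegral.integral_const_mul, intervalIntegral.integral_const_mul,
      int_exp_zero (-1) (by norm_num), int_exp_zero (-2) (by norm_num),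
      intervalIntegral.integral_const, Complex.real_smul]
    push_cast
    field_simp
    ring
  refine ⟨hg1, ?_, hg2⟩
  rw [hg1, hg2]
  push_cast
  field_simp
  ring
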